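/- Under the hypotheses of the ℝ⁵ double-rotation Taylor–Proudman theorem — λ₁, λ₂ ∈ ℝ nonzero, u : ℝ⁵ → ℝ⁵ continuously differentiable, Π : ℝ⁵ → ℝ twice continuously differentiable with 2(−λ₁ u₂, λ₁ u₁, −λ₂ u₄, λ₂ u₃, 0) = −∇Π everywhere — together with the incompressibility condition Σ_{i=1}^{5} u_{i,i} = 0, one has u_{5,5} = 0 everywhere; that is, the total incompressibility decomposes into the two planar incompressibilities u_{1,1} + u_{2,2} = 0 and u_{3,3} + u_{4,4} = 0 plus u_{5,5} = 0. -/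

import Mathlib

/-- The partial derivative `∂ᵢ f` of a scalar function on `ℝ^n` at `x`. -/
noncomputable def pd {n : ℕ} (i : Fin n) (f : (Fin n → ℝ) → ℝ) (x : Fin n → ℝ) : ℝ :=
  fderiv ℝ f x (Pi.single i 1)

lemma fderiv_diff {n : ℕ} {f : (Fin n → ℝ) → ℝ} (hf : ContDiff ℝ 2 f) (x : Fin n → ℝ) :
    DifferentiableAt ℝ (fderiv ℝ f) x :=
  ((hf.fderiv_right (m := 1) (by norm_num)).differentiable one_ne_zero).differentiableAt

lemma pd_diff {n : ℕ} {f : (Fin n → ℝ) → ℝ} (hf : ContDiff ℝ 2 f) (j : Fin n)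
    (x : Fin n → ℝ) : DifferentiableAt ℝ (pd j f) x :=
  (fderiv_diff hf x).clm_apply (differentiableAt_const _)

lemma pd_pd {n : ℕ} {f : (Fin n → ℝ) → ℝ} (hf : ContDiff ℝ 2 f) (i j : Fin n)
    (x : Fin n → ℝ) :
    pd i (pd j f) x = fderiv ℝ (fderiv ℝ f) x (Pi.single i 1) (Pi.single j 1) := by
  have h : HasFDerivAt (fun y => (fderiv ℝ f y) (Pi.single j 1))
      ((fderiv ℝ f x).comp (0 : (Fin n → ℝ) →L[ℝ] (Fin n → ℝ)) +
        (fderiv ℝ (fderiv ℝ f) x).flip (Pi.single j 1)) x :=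
    (fderiv_diff hf x).hasFDerivAt.clm_apply (hasFDerivAt_const _ _)
  show fderiv ℝ (fun y => (fderiv ℝ f y) (Pi.single j 1)) x (Pi.single i 1) = _
  rw [h.fderiv]
  simp

lemma pd_comm {n : ℕ} {f : (Fin n → ℝ) → ℝ} (hf : ContDiff ℝ 2 f) (i j : Fin n)
    (x : Fin n → ℝ) : pd i (pd j f) x = pd j (pd i f) x := by
  rw [pd_pd hf, pd_pd hf]
  exact (hf.contDiffAt.isSymmSndFDerivAt (by norm_num)) _ _

lemma pd_const_mul {n : ℕ} {f : (Fin n → ℝ) → ℝ} {x : Fin n → ℝ}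
    (hf : DifferentiableAt ℝ f x) (c : ℝ) (i : Fin n) :
    pd i (fun y => c * f y) x = c * pd i f x := by
  unfold pd
  rw [fderiv_const_mul hf]
  simp

/-- Under the hypotheses of the `ℝ⁵` double-rotation Taylor–Proudman
theorem together with total incompressibility, one has `u_{5,5} = 0`; that is, the total
incompressibility decomposes into the two planar incompressibilities plus `u_{5,5} = 0`
(0-indexed coordinates). -/
theorem taylor_proudman_R5_incompressible_decomposition
    (lam₁ lam₂ : ℝ) (h₁ : lam₁ ≠ 0) (h₂ : lam₂ ≠ 0)
    (u : (Fin 5 → ℝ) → (Fin 5 → ℝ)) (hu : ContDiff ℝ 1 u)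
    (Pr : (Fin 5 → ℝ) → ℝ) (hPr : ContDiff ℝ 2 Pr)
    (hbal : ∀ x : Fin 5 → ℝ,
      2 * (-lam₁ * u x 1) = -(pd 0 Pr x) ∧
      2 * (lam₁ * u x 0) = -(pd 1 Pr x) ∧
      2 * (-lam₂ * u x 3) = -(pd 2 Pr x) ∧
      2 * (lam₂ * u x 2) = -(pd 3 Pr x) ∧
      (0 : ℝ) = -(pd 4 Pr x))
    (hinc : ∀ x : Fin 5 → ℝ,
      pd 0 (fun y => u y 0) x + pd 1 (fun y => u y 1) x + pd 2 (fun y => u y 2) x +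
        pd 3 (fun y => u y 3) x + pd 4 (fun y => u y 4) x = 0) :
    ∀ x : Fin 5 → ℝ,
      pd 4 (fun y => u y 4) x = 0 ∧
      pd 0 (fun y => u y 0) x + pd 1 (fun y => u y 1) x = 0 ∧
      pd 2 (fun y => u y 2) x + pd 3 (fun y => u y 3) x = 0 := by
  intro x
  have e0 : (fun y => u y 0) = fun y => (-(1 / (2 * lam₁))) * pd 1 Pr y := by
    funext y
    have h := (hbal y).2.1
    field_simp
    linarith
  have e1 : (fun y => u y 1) = fun y => (1 / (2 * lam₁)) * pd 0 Pr y := by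
    funext y
    have h := (hbal y).1
    field_simp
    linarith
  have e2 : (fun y => u y 2) = fun y => (-(1 / (2 * lam₂))) * pd 3 Pr y := by
    funext y
    have h := (hbal y).2.2.2.1
    field_simp
    linarith
  have e3 : (fun y => u y 3) = fun y => (1 / (2 * lam₂)) * pd 2 Pr y := by
    funext y
    have h := (hbal y).2.2.1
    field_simp
    linarith
  have s1 : pd 0 (fun y => u y 0) x + pd 1 (fun y => u y 1) x = 0 := by
    rw [e0, e1, pd_const_mul (pd_diff hPr 1 x), pd_const_mul (pd_diff hPr 0 x),
      pd_comm hPr 0 1 x]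
    ring
  have s2 : pd 2 (fun y => u y 2) x + pd 3 (fun y => u y 3) x = 0 := by
    rw [e2, e3, pd_const_mul (pd_diff hPr 3 x), pd_const_mul (pd_diff hPr 2 x),
      pd_comm hPr 2 3 x]
    ring
  have h5 := hinc x
  exact ⟨by linarith, s1, s2⟩
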